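/- Let s be a positive integer, δ ≥ 0, |ψ⟩ a unit vector in a finite-dimensional Hilbert space H, and B ∈ L(H) a normal operator such that ‖(B^s − Id)|ψ⟩‖² ≤ δ. Then there exists a unitary U with the same eigenvectors as B such that U^s = Id and ‖(B − U)|ψ⟩‖² ≤ 4δ. -/

import Mathlib

open Matrix

section RealPart
open Real

lemma one_sub_cos_eq (x : ℝ) : 1 - Real.cos x = 2 * Real.sin (x/2) ^ 2 := by
  have := Real.sin_sq_eq_half_sub (x/2)
  have h2 : 2 * (x/2) = x := by ring
  rw [h2] at this
  linarith

lemma one_sub_cos_le_sq (x : ℝ) (hx : 0 ≤ x) : 1 - Real.cos x ≤ x^2 / 2 := by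
  rw [one_sub_cos_eq]
  have h1 : Real.sin (x/2) ≤ x/2 := Real.sin_le (by linarith)
  rcases le_or_gt 0 (Real.sin (x/2)) with h2 | h2
  · nlinarith
  · have hx2 : π < x/2 := by
      by_contra hc
      push_neg at hc
      exact absurd (Real.sin_nonneg_of_nonneg_of_le_pi (by linarith) hc) (not_le.mpr h2)
    have := Real.pi_gt_three
    nlinarith [Real.neg_one_le_sin (x/2), Real.sin_le_one (x/2)]

lemma one_sub_cos_smul_ge (s : ℕ) (hs : 1 ≤ s) (φ : ℝ) (hφ : 0 ≤ φ) (hsφ : (s:ℝ) * φ ≤ π) :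
    4 / π^2 * (s:ℝ)^2 * (1 - Real.cos φ) ≤ 1 - Real.cos ((s:ℝ)*φ) := by
  have h1s : (1:ℝ) ≤ (s:ℝ) := by exact_mod_cast hs
  rw [one_sub_cos_eq, one_sub_cos_eq]
  have hφπ : φ ≤ π := le_trans (by nlinarith) hsφ
  have hsin1 : Real.sin (φ/2) ≤ φ/2 := Real.sin_le (by linarith)
  have hsin1' : 0 ≤ Real.sin (φ/2) :=
    Real.sin_nonneg_of_nonneg_of_le_pi (by linarith) (by nlinarith [Real.pi_pos])
  have hsin2 : 2/π * ((s:ℝ)*φ/2) ≤ Real.sin ((s:ℝ)*φ/2) :=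
    Real.mul_le_sin (by positivity) (by linarith)
  have hπ : (0:ℝ) < π := Real.pi_pos
  have h0 : 0 ≤ 2/π * ((s:ℝ)*φ/2) := by positivity
  have key : (2/π * ((s:ℝ)*φ/2))^2 ≤ Real.sin ((s:ℝ)*φ/2)^2 := by nlinarith
  have key2 : Real.sin (φ/2)^2 ≤ (φ/2)^2 := by nlinarith
  have expand : (2/π * ((s:ℝ)*φ/2))^2 = 4/π^2 * (s:ℝ)^2 * (φ/2)^2 := by
    field_simp; ring
  have hc : (0:ℝ) ≤ 4/π^2 * (s:ℝ)^2 := by positivity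
  nlinarith [mul_le_mul_of_nonneg_left key2 hc]


lemma sq_sub_one_le (s : ℕ) (hs : 1 ≤ s) (r : ℝ) (hr : 0 ≤ r) :
    (r-1)^2 ≤ (r^s-1)^2 := by
  have hgeom : (∑ i ∈ Finset.range s, r ^ i) * (r - 1) = r ^ s - 1 := geom_sum_mul r s
  have hone : 1 ≤ ∑ i ∈ Finset.range s, r ^ i := by
    have := Finset.single_le_sum (f := fun i => r ^ i)
      (fun i _ => pow_nonneg hr i) (Finset.mem_range.mpr hs)
    simpa using this
  have h2 : 1 ≤ (∑ i ∈ Finset.range s, r ^ i)^2 := by nlinarith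
  have h3 : (r^s-1)^2 = (∑ i ∈ Finset.range s, r ^ i)^2 * (r-1)^2 := by
    rw [← hgeom, mul_pow]
  rw [h3]
  nlinarith [mul_le_mul_of_nonneg_right h2 (sq_nonneg (r-1))]

set_option maxHeartbeats 1600000 in
lemma key_real (s : ℕ) (hs : 1 ≤ s) (r φ : ℝ) (hr : 0 ≤ r) (hφ0 : 0 ≤ φ)
    (hφ : (s:ℝ)*φ ≤ π) :
    (r-1)^2 + 2*r*(1 - Real.cos φ) ≤ 4*((r^s-1)^2 + 2*r^s*(1 - Real.cos ((s:ℝ)*φ))) := by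
  have h1s : (1:ℝ) ≤ (s:ℝ) := by exact_mod_cast hs
  have hπ : (0:ℝ) < π := Real.pi_pos
  set c := 1 - Real.cos φ with hc
  set C := 1 - Real.cos ((s:ℝ)*φ) with hC
  have hc0 : 0 ≤ c := by simp only [hc, sub_nonneg]; exact Real.cos_le_one φ
  have hC0 : 0 ≤ C := by simp only [hC, sub_nonneg]; exact Real.cos_le_one _
  have hrs : (0:ℝ) ≤ r^s := pow_nonneg hr s
  have hstep1 : (r-1)^2 ≤ (r^s-1)^2 := sq_sub_one_le s hs r hr
  have hπ2 : π^2 ≤ 9.9225 := by nlinarith [Real.pi_lt_d2, Real.pi_pos]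
  have hlb : 4 / π^2 * (s:ℝ)^2 * c ≤ C := one_sub_cos_smul_ge s hs φ hφ0 hφ
  have hlb' : 4 * (s:ℝ)^2 * c ≤ π^2 * C := by
    have h := mul_le_mul_of_nonneg_left hlb (by positivity : (0:ℝ) ≤ π^2)
    have hne : π^2 ≠ 0 := by positivity
    have heq : π^2 * (4 / π^2 * (s:ℝ)^2 * c) = 4 * (s:ℝ)^2 * c := by
      field_simp
    linarith [heq ▸ h]
  have hcφ : c ≤ φ^2/2 := one_sub_cos_le_sq φ hφ0
  clear_value c C
  -- step 2
  have hstep2 : 2*r*c ≤ 3*(r^s-1)^2 + 8*r^s*C := by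
    rcases le_or_gt (2*r) (3*(s:ℝ)^2*r^s) with hA | hB
    · have h5 : 4*(s:ℝ)^2*c*(r^s) ≤ π^2*C*(r^s) := mul_le_mul_of_nonneg_right hlb' hrs
      have h6 : π^2*(C*r^s) ≤ 9.9225*(C*r^s) :=
        mul_le_mul_of_nonneg_right hπ2 (mul_nonneg hC0 hrs)
      have h7 : 2*r*c ≤ 3*(s:ℝ)^2*r^s*c := mul_le_mul_of_nonneg_right hA hc0
      linarith [mul_nonneg hC0 hrs, sq_nonneg (r^s-1)]
    · have hs2 : 2 ≤ s := by
        by_contra hcon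
        have : s = 1 := by omega
        subst this
        simp only [pow_one, Nat.cast_one, one_pow] at hB
        nlinarith
      have h2s : (2:ℝ) ≤ (s:ℝ) := by exact_mod_cast hs2
      have hs4 : (4:ℝ) ≤ (s:ℝ)^2 := by nlinarith
      have hr1 : r ≤ 1 := by
        by_contra hcon
        push_neg at hcon
        have hles : r ≤ r^s := le_self_pow₀ (le_of_lt hcon) (by omega)
        nlinarith
      have hrs16 : r^s ≤ 1/6 := by
        nlinarith [mul_nonneg (by linarith : (0:ℝ) ≤ (s:ℝ)^2 - 4) hrs]
      have hQ : 25/12 ≤ 3*(r^s-1)^2 := by nlinarith [hrs, hrs16]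
      have hsφ0 : 0 ≤ (s:ℝ)*φ := by positivity
      have hφ2 : φ^2 * (s:ℝ)^2 ≤ π^2 := by nlinarith [mul_le_mul hφ hφ hsφ0 hπ.le]
      have hLHS : 2*r*c ≤ r*φ^2 := by nlinarith
      have h8 : 0 ≤ 8*r^s*C := by positivity
      rcases (by omega : s = 2 ∨ 3 ≤ s) with hseq | hs3
      · subst hseq
        norm_num at hB
        have hr0 : 0 < r := by nlinarith [sq_nonneg r]
        have hr16 : r ≤ 1/6 := by nlinarith [mul_pos hr0 hr0]
        have hφ2' : φ^2 ≤ 2.481 := by norm_num at hφ2 ⊢; nlinarith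
        nlinarith [mul_le_mul hr16 hφ2' (sq_nonneg φ) (by norm_num : (0:ℝ) ≤ 1/6)]
      · have hs9 : (9:ℝ) ≤ (s:ℝ)^2 := by
          have : (3:ℝ) ≤ (s:ℝ) := by exact_mod_cast hs3
          nlinarith
        have hφ2'' : φ^2 ≤ 1.1025 := by
          nlinarith [mul_le_mul_of_nonneg_left hs9 (sq_nonneg φ)]
        nlinarith [mul_le_mul hr1 hφ2'' (sq_nonneg φ) (by norm_num : (0:ℝ) ≤ 1)]
  linarith

end RealPart

section ComplexPart
open Real
noncomputable def rnd (s : ℕ) (z : ℂ) : ℂ :=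
  Complex.exp ((2 * Real.pi * (round ((s:ℝ) * z.arg / (2 * Real.pi)) : ℤ) / s : ℝ) * Complex.I)

lemma rnd_pow (s : ℕ) (hs : 0 < s) (z : ℂ) : rnd s z ^ s = 1 := by
  rw [rnd, ← Complex.exp_nat_mul]
  set k : ℤ := round ((s:ℝ) * z.arg / (2 * Real.pi)) with hk
  have hsne : ((s:ℂ)) ≠ 0 := Nat.cast_ne_zero.mpr hs.ne'
  have : (s:ℂ) * (((2 * Real.pi * (k:ℝ) / s : ℝ) : ℂ) * Complex.I) = (k:ℂ) * (2*(Real.pi:ℂ)*Complex.I) := by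
    push_cast
    field_simp
  rw [this, Complex.exp_int_mul_two_pi_mul_I]

lemma rnd_eq_self (s : ℕ) (hs : 0 < s) (z : ℂ) (hz : z ^ s = 1) : rnd s z = z := by
  have habs : ‖z‖ = 1 := by
    have h1 : ‖z‖ ^ s = 1 := by rw [← norm_pow, hz, norm_one]
    have h0 : 0 ≤ ‖z‖ := norm_nonneg z
    rcases lt_trichotomy ‖z‖ 1 with hlt | heq | hgt
    · exact absurd h1 (by nlinarith [pow_lt_one₀ h0 hlt hs.ne'])
    · exact heq
    · exact absurd h1 (by nlinarith [one_lt_pow₀ hgt hs.ne'])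
  have hzeq : Complex.exp ((z.arg : ℂ) * Complex.I) = z := by
    have := Complex.norm_mul_exp_arg_mul_I z
    rwa [habs, Complex.ofReal_one, one_mul] at this
  have hexp : Complex.exp ((s:ℂ) * ((z.arg : ℂ) * Complex.I)) = 1 := by
    rw [Complex.exp_nat_mul, hzeq, hz]
  rw [Complex.exp_eq_one_iff] at hexp
  obtain ⟨m, hm⟩ := hexp
  have harg : (s:ℝ) * z.arg = m * (2 * Real.pi) := by
    have := congrArg Complex.im hm
    simpa [Complex.mul_im, Complex.ofReal_re, Complex.ofReal_im] using this
  have hπ : (0:ℝ) < Real.pi := Real.pi_pos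
  have hs' : ((s:ℝ)) ≠ 0 := Nat.cast_ne_zero.mpr hs.ne'
  have hdiv : (s:ℝ) * z.arg / (2 * Real.pi) = m := by
    rw [harg, mul_div_assoc, div_self (by positivity), mul_one]
  rw [rnd, hdiv, round_intCast]
  have h2 : (2 * Real.pi * (m:ℝ) / s : ℝ) = z.arg := by
    field_simp at harg ⊢
    linarith
  rw [h2, hzeq]

example : True := trivial

lemma abs_sub_exp_sq (r β γ : ℝ) :
    ‖(r:ℂ) * Complex.exp ((β:ℂ)*Complex.I) - Complex.exp ((γ:ℂ)*Complex.I)‖^2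
      = (r-1)^2 + 2*r*(1 - Real.cos (β - γ)) := by
  rw [Complex.sq_norm, Complex.normSq_apply]
  simp only [Complex.sub_re, Complex.sub_im, Complex.mul_re, Complex.mul_im,
    Complex.ofReal_re, Complex.ofReal_im, Complex.exp_ofReal_mul_I_re,
    Complex.exp_ofReal_mul_I_im, zero_mul, sub_zero, zero_add, add_zero]
  rw [Real.cos_sub]
  ring_nf
  nlinarith [Real.sin_sq_add_cos_sq β, Real.sin_sq_add_cos_sq γ]

lemma rnd_close (s : ℕ) (hs : 0 < s) (z : ℂ) :
    ‖z - rnd s z‖^2 ≤ 4 * ‖z^s - 1‖^2 := by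
  set θ := z.arg with hθ
  set r := ‖z‖ with hr
  set k : ℤ := round ((s:ℝ) * θ / (2 * Real.pi)) with hk
  set α : ℝ := 2 * Real.pi * (k:ℝ) / s with hα
  have hπ : (0:ℝ) < Real.pi := Real.pi_pos
  have hs' : (0:ℝ) < (s:ℝ) := by exact_mod_cast hs
  have hφabs : |θ - α| ≤ Real.pi / s := by
    have h1 : |(s:ℝ) * θ / (2 * Real.pi) - k| ≤ 1/2 := abs_sub_round _
    have h2 : θ - α = (2 * Real.pi / s) * ((s:ℝ) * θ / (2 * Real.pi) - k) := by
      rw [hα]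
      field_simp
    rw [h2, abs_mul, abs_of_pos (by positivity : (0:ℝ) < 2 * Real.pi / s)]
    calc 2 * Real.pi / s * |(s:ℝ) * θ / (2 * Real.pi) - k| ≤ 2 * Real.pi / s * (1/2) := by
          apply mul_le_mul_of_nonneg_left h1 (by positivity)
    _ = Real.pi / s := by ring
  -- decompose z
  have hz : z = (r:ℂ) * Complex.exp ((θ:ℂ)*Complex.I) := (Complex.norm_mul_exp_arg_mul_I z).symm
  have hrnd : rnd s z = Complex.exp ((α:ℂ)*Complex.I) := by rw [rnd]
  -- LHS
  have hL : ‖z - rnd s z‖^2 = (r-1)^2 + 2*r*(1 - Real.cos (θ - α)) := by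
    rw [hrnd]
    nth_rewrite 1 [hz]
    exact abs_sub_exp_sq r θ α
  -- RHS
  have hzs : z^s = ((r^s : ℝ):ℂ) * Complex.exp (((s:ℝ)*θ : ℝ) * Complex.I) := by
    nth_rewrite 1 [hz]
    rw [mul_pow, ← Complex.exp_nat_mul]
    push_cast
    ring_nf
  have hR : ‖z^s - 1‖^2 = (r^s-1)^2 + 2*r^s*(1 - Real.cos ((s:ℝ)*θ - 0)) := by
    rw [hzs]
    have h1 : (1:ℂ) = Complex.exp ((0:ℝ)*Complex.I) := by simp
    nth_rewrite 1 [h1]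
    exact abs_sub_exp_sq (r^s) ((s:ℝ)*θ) 0
  rw [hL, hR]
  -- relate angles
  have hang : (s:ℝ)*θ - 0 = (s:ℝ)*(θ - α) + k*(2*Real.pi) := by
    rw [hα]; field_simp; ring
  rw [hang, Real.cos_add_int_mul_two_pi]
  -- use |φ|
  have hcos1 : Real.cos (θ - α) = Real.cos |θ - α| := (Real.cos_abs _).symm
  have hcos2 : Real.cos ((s:ℝ)*(θ - α)) = Real.cos ((s:ℝ)*|θ - α|) := by
    rcases abs_cases (θ - α) with ⟨h, _⟩ | ⟨h, _⟩
    · rw [h]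
    · rw [h, mul_neg, Real.cos_neg]
  rw [hcos1, hcos2]
  have hr0 : 0 ≤ r := norm_nonneg z
  have hsφ : (s:ℝ) * |θ - α| ≤ Real.pi := by
    calc (s:ℝ) * |θ - α| ≤ (s:ℝ) * (Real.pi / s) := by
          apply mul_le_mul_of_nonneg_left hφabs (by positivity)
    _ = Real.pi := by field_simp
  exact key_real s hs r |θ - α| hr0 (abs_nonneg _) hsφ

lemma rnd_abs_one (s : ℕ) (z : ℂ) : ‖rnd s z‖ = 1 := by
  rw [rnd, Complex.norm_exp_ofReal_mul_I]

end ComplexPart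

section MatrixPart
open scoped Matrix.Norms.L2Operator

variable {n : Type} [Fintype n] [DecidableEq n]

noncomputable instance : CStarAlgebra (Matrix n n ℂ) where

lemma finite_contOn (A : Matrix n n ℂ) (f : ℂ → ℂ) : ContinuousOn f (spectrum ℂ A) := by
  have hfin : (spectrum ℂ A).Finite := A.finite_spectrum
  have : Finite (spectrum ℂ A) := hfin.to_subtype
  have : DiscreteTopology (spectrum ℂ A) := Finite.instDiscreteTopology
  rw [continuousOn_iff_continuous_restrict]
  exact continuous_of_discreteTopology

-- cfc of a polynomial eval is aeval
lemma cfc_eval_eq_aeval (A : Matrix n n ℂ) (hA : IsStarNormal A) (p : Polynomial ℂ) :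
    cfc (fun z => p.eval z) A = Polynomial.aeval A p := by
  induction p using Polynomial.induction_on' with
  | add p q hp hq =>
    have : (fun z => (p + q).eval z) = fun z => p.eval z + q.eval z := by
      funext z; simp
    rw [this, cfc_add _ _ _ (finite_contOn A _) (finite_contOn A _), hp, hq, map_add]
  | monomial m a =>
    have h1 : (fun z => (Polynomial.monomial m a).eval z) = fun z => a * z ^ m := by
      funext z; simp [Polynomial.eval_monomial]
    rw [h1, Polynomial.aeval_monomial]
    have h2 : (fun z : ℂ => a * z ^ m) = fun z : ℂ => (fun _ => a) z * (fun w : ℂ => w ^ m) z := rfl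
    rw [h2, cfc_mul _ _ _ (finite_contOn A _) (finite_contOn A _), cfc_const a A, cfc_pow_id A m]

lemma mulVec_aeval (A : Matrix n n ℂ) (p : Polynomial ℂ) (μ : ℂ) (v : n → ℂ)
    (hv : A.mulVec v = μ • v) :
    (Polynomial.aeval A p).mulVec v = p.eval μ • v := by
  have hpow : ∀ m : ℕ, (A ^ m).mulVec v = μ ^ m • v := by
    intro m
    induction m with
    | zero => simp
    | succ m ih =>
      rw [pow_succ, ← Matrix.mulVec_mulVec, hv, Matrix.mulVec_smul, ih, pow_succ, smul_smul, mul_comm]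
  induction p using Polynomial.induction_on' with
  | add p q hp hq => rw [map_add, Matrix.add_mulVec, hp, hq, Polynomial.eval_add, add_smul]
  | monomial m a =>
    rw [Polynomial.aeval_monomial, Polynomial.eval_monomial]
    rw [← Matrix.mulVec_mulVec, hpow m, Matrix.mulVec_smul,
      Algebra.algebraMap_eq_smul_one, Matrix.smul_mulVec, Matrix.one_mulVec,
      smul_smul, mul_comm a (μ ^ m)]

lemma cfc_const_one' (A : Matrix n n ℂ) (hA : IsStarNormal A) :
    cfc (fun _ : ℂ => (1:ℂ)) A = 1 := by
  have h := cfc_const (1:ℂ) A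
  rwa [_root_.map_one] at h

lemma sum_normSq_eq (w : n → ℂ) :
    ∑ i, Complex.normSq (w i)
      = ‖((EuclideanSpace.equiv n ℂ).symm w : EuclideanSpace ℂ n)‖^2 := by
  rw [EuclideanSpace.norm_eq, Real.sq_sqrt (by positivity)]
  refine Finset.sum_congr rfl fun i _ => ?_
  rw [Complex.normSq_eq_norm_sq]
  rfl

/-- Rounding a normal operator to a root-of-unity unitary (Claim 2.5): if
`‖(B^s - Id)ψ‖² ≤ δ` for a normal `B`, there is a unitary `U` with the same eigenvectors
as `B`, `U^s = Id`, and `‖(B - U)ψ‖² ≤ 4δ`. -/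
theorem round_to_roots
    (s : ℕ) (hs : 0 < s) (δ : ℝ) (hδ : 0 ≤ δ)
    (n : Type) [Fintype n] [DecidableEq n]
    (B : Matrix n n ℂ) (hB : B * Bᴴ = Bᴴ * B)
    (ψ : n → ℂ) (hψ : ∑ i, Complex.normSq (ψ i) = 1)
    (h : ∑ i, Complex.normSq ((Matrix.mulVec (B ^ s - 1) ψ) i) ≤ δ) :
    ∃ U : Matrix n n ℂ, U ∈ Matrix.unitaryGroup n ℂ ∧ U ^ s = 1 ∧
      (∀ (μ : ℂ) (v : n → ℂ), Matrix.mulVec B v = μ • v →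
        ∃ ν : ℂ, Matrix.mulVec U v = ν • v) ∧
      ∑ i, Complex.normSq ((Matrix.mulVec (B - U) ψ) i) ≤ 4 * δ := by
  have hN : IsStarNormal B := ⟨hB.symm⟩
  set U : Matrix n n ℂ := cfc (rnd s) B with hU
  refine ⟨U, ?_, ?_, ?_, ?_⟩
  · -- unitary
    rw [Matrix.mem_unitaryGroup_iff']
    have h1 : star U * U = cfc (fun z => star (rnd s z) * rnd s z) B := by
      rw [cfc_mul _ _ B (finite_contOn _ _) (finite_contOn _ _), cfc_star]
    have h2 : (fun z => star (rnd s z) * rnd s z) = fun _ : ℂ => (1:ℂ) := by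
      funext z
      rw [Complex.star_def, mul_comm, Complex.mul_conj, Complex.normSq_eq_norm_sq, rnd_abs_one]
      norm_num
    rw [h1, h2]
    exact cfc_const_one' B hN
  · -- U ^ s = 1
    rw [hU, ← cfc_pow _ s B (finite_contOn _ _)]
    have h2 : (fun z => rnd s z ^ s) = fun _ : ℂ => (1:ℂ) := funext fun z => rnd_pow s hs z
    rw [h2]
    exact cfc_const_one' B hN
  · -- eigenvectors
    intro μ v hv
    set σf : Finset ℂ := (Matrix.finite_spectrum B).toFinset with hσf
    set p : Polynomial ℂ := Lagrange.interpolate σf id (rnd s) with hp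
    have hUp : U = Polynomial.aeval B p := by
      rw [hU, ← cfc_eval_eq_aeval B hN p]
      apply cfc_congr
      intro z hz
      have hzs : z ∈ σf := by
        rw [hσf, Set.Finite.mem_toFinset]
        exact hz
      exact (Lagrange.eval_interpolate_at_node (rnd s) (Set.injOn_id _) hzs).symm
    exact ⟨p.eval μ, by rw [hUp]; exact mulVec_aeval B p μ v hv⟩
  · -- norm bound
    set g : ℂ → ℂ := fun z => if z ^ s = 1 then 0 else (z - rnd s z) / (z ^ s - 1) with hg
    have hfact : (fun z : ℂ => z - rnd s z) = fun z => g z * (z ^ s - 1) := by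
      funext z
      by_cases hz : z ^ s = 1
      · simp only [hg, hz, if_pos, sub_self, mul_zero]
        rw [rnd_eq_self s hs z hz, sub_self]
      · simp only [hg, hz, if_neg, if_false]
        rw [div_mul_cancel₀]
        exact sub_ne_zero.mpr hz
    have hBU : B - U = cfc g B * (B ^ s - 1) := by
      have h1 : B - U = cfc (fun z : ℂ => z - rnd s z) B := by
        rw [cfc_sub (fun z : ℂ => z) (rnd s) B (finite_contOn _ _) (finite_contOn _ _),
          cfc_id' ℂ B]
      have h2 : cfc (fun z : ℂ => z ^ s - 1) B = B ^ s - 1 := by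
        rw [cfc_sub (fun z : ℂ => z ^ s) (fun _ => 1) B (finite_contOn _ _) (finite_contOn _ _),
          cfc_pow_id B s]
        congr 1
        exact cfc_const_one' B hN
      rw [h1, hfact, cfc_mul _ _ B (finite_contOn _ _) (finite_contOn _ _), h2]
    have hg2 : ∀ z ∈ spectrum ℂ B, ‖g z‖ ≤ 2 := by
      intro z _
      by_cases hz : z ^ s = 1
      · simp [hg, hz]
      · have hb : 0 < ‖z ^ s - 1‖ := by
          rw [norm_pos_iff]
          exact sub_ne_zero.mpr hz
        have hclose := rnd_close s hs z
        have ha : ‖z - rnd s z‖ ≤ 2 * ‖z ^ s - 1‖ := by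
          nlinarith [norm_nonneg (z - rnd s z), norm_nonneg (z ^ s - 1)]
        simp only [hg, hz, if_neg, if_false]
        rw [norm_div, div_le_iff₀ hb]
        linarith
    have hnorm : ‖cfc g B‖ ≤ 2 := norm_cfc_le (by norm_num) hg2
    -- bridge
    set x : EuclideanSpace ℂ n := (EuclideanSpace.equiv n ℂ).symm ((B ^ s - 1).mulVec ψ) with hx
    set y : EuclideanSpace ℂ n := (EuclideanSpace.equiv n ℂ).symm ((B - U).mulVec ψ) with hy
    have hyx : ‖y‖ ≤ 2 * ‖x‖ := by
      have hmv : (B - U).mulVec ψ = (cfc g B).mulVec ((B ^ s - 1).mulVec ψ) := by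
        rw [hBU, ← Matrix.mulVec_mulVec]
      calc ‖y‖ = ‖(EuclideanSpace.equiv n ℂ).symm ((cfc g B).mulVec x)‖ := by rw [hy, hmv]; rfl
      _ ≤ ‖cfc g B‖ * ‖x‖ := Matrix.l2_opNorm_mulVec _ _
      _ ≤ 2 * ‖x‖ := by
          apply mul_le_mul_of_nonneg_right hnorm (norm_nonneg _)
    have hxb : ‖x‖^2 ≤ δ := by rw [← sum_normSq_eq]; exact h
    have hyb : ∑ i, Complex.normSq ((Matrix.mulVec (B - U) ψ) i) = ‖y‖^2 := sum_normSq_eq _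
    rw [hyb]
    nlinarith [norm_nonneg x, norm_nonneg y]

end MatrixPart
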